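/- Let v be an even, nondecreasing, submultiplicative weight on ℝ, let h > 0, and let f: ℝ → ℂ be continuous with amalgam norm ‖f‖_W = (Σ_{l∈ℤ} sup_{x∈[0,1]} |f(x+l)|² v(l)²)^{1/2} < ∞. Then Σ_{j∈ℤ} |f(hj)|² v(hj)² ≤ ⌈1/h⌉ · v(1)² · ‖f‖_W². -/

import Mathlib

/-- Local sup of |f| on the unit interval [l, l+1]. -/
noncomputable def locSup (f : ℝ → ℂ) (l : ℤ) : ℝ :=
  ⨆ x ∈ Set.Icc (0:ℝ) 1, ‖f (x + (l : ℝ))‖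

lemma abs_le_locSup (f : ℝ → ℂ) (hf : Continuous f) (l : ℤ) {x : ℝ}
    (hx : x ∈ Set.Icc (0:ℝ) 1) : ‖f (x + (l : ℝ))‖ ≤ locSup f l := by
  set g : ℝ → ℝ := fun x => ‖f (x + (l : ℝ))‖ with hg
  have hcont : Continuous g := continuous_norm.comp (hf.comp (continuous_add_right _))
  have hb : BddAbove (g '' Set.Icc 0 1) := (isCompact_Icc.image hcont).bddAbove
  have hb' : BddAbove (Set.range fun i : Set.Icc (0:ℝ) 1 => g i) := by
    rwa [Set.image_eq_range] at hb
  have hne : (Set.Icc (0:ℝ) 1).Nonempty := ⟨0, by norm_num⟩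
  have hnn : (0:ℝ) ≤ ⨆ i : Set.Icc (0:ℝ) 1, g i := by
    haveI : Nonempty (Set.Icc (0:ℝ) 1) := hne.to_subtype
    exact le_trans (norm_nonneg _) (le_ciSup hb' ⟨0, by norm_num⟩)
  have heq : sSup (g '' Set.Icc 0 1) = locSup f l := by
    rw [locSup]
    exact csSup_image hb' (by rw [Real.sSup_empty]; exact hnn)
  calc ‖f (x + (l : ℝ))‖ ≤ sSup (g '' Set.Icc 0 1) :=
        le_csSup hb ⟨x, hx, rfl⟩
    _ = locSup f l := heq

lemma locSup_nonneg (f : ℝ → ℂ) (hf : Continuous f) (l : ℤ) : 0 ≤ locSup f l :=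
  le_trans (norm_nonneg _) (abs_le_locSup f hf l (by norm_num : (0:ℝ) ∈ Set.Icc (0:ℝ) 1))

/-- For an even, nondecreasing, submultiplicative weight v, h > 0 and a
continuous f with finite amalgam norm ‖f‖_W, the weighted samples satisfy
Σ_{j∈ℤ} |f(hj)|² v(hj)² ≤ ⌈1/h⌉ · v(1)² · ‖f‖_W². -/
theorem weighted_sample_sum_bound (v : ℝ → ℝ) (f : ℝ → ℂ)
    (hpos : ∀ x, 0 < v x)
    (heven : ∀ x, v (-x) = v x)
    (hmono : ∀ x y, |x| ≤ |y| → v x ≤ v y)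
    (hsub : ∀ x y, v (x + y) ≤ v x * v y)
    (hf : Continuous f)
    (hW : Summable fun l : ℤ => locSup f l ^ 2 * v (l : ℝ) ^ 2)
    (h : ℝ) (hh : 0 < h) :
    ∑' j : ℤ, ‖f (h * (j : ℝ))‖ ^ 2 * v (h * (j : ℝ)) ^ 2 ≤
      ((⌈1/h⌉ : ℤ) : ℝ) * v 1 ^ 2 * ∑' l : ℤ, locSup f l ^ 2 * v (l : ℝ) ^ 2 := by
  classical
  set g : ℤ → ℝ := fun j => ‖f (h * (j : ℝ))‖ ^ 2 * v (h * (j : ℝ)) ^ 2 with hgdef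
  set a : ℤ → ℝ := fun l => locSup f l ^ 2 * v (l : ℝ) ^ 2 with hadef
  have hga : ∀ j, 0 ≤ g j := fun j =>
    mul_nonneg (sq_nonneg _) (sq_nonneg _)
  have haa : ∀ l, 0 ≤ a l := fun l => mul_nonneg (sq_nonneg _) (sq_nonneg _)
  -- the floor map
  set φ : ℤ → ℤ := fun j => ⌊h * (j : ℝ)⌋ with hφdef
  -- pointwise bound
  have key : ∀ j : ℤ, g j ≤ v 1 ^ 2 * a (φ j) := by
    intro j
    set l : ℤ := φ j with hl
    have h1 : (l : ℝ) ≤ h * j := Int.floor_le _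
    have h2 : h * j < (l : ℝ) + 1 := Int.lt_floor_add_one _
    -- |f(hj)| ≤ locSup f l
    have hx : h * j - l ∈ Set.Icc (0:ℝ) 1 := ⟨by linarith, by linarith⟩
    have habs : ‖f (h * j)‖ ≤ locSup f l := by
      have := abs_le_locSup f hf l hx
      simpa using this
    -- v(hj) ≤ v 1 * v l
    have hvl : v |(l : ℝ)| = v (l : ℝ) := by
      rcases abs_choice (l : ℝ) with hc | hc
      · rw [hc]
      · rw [hc, heven]
    have hvbound : v (h * j) ≤ v 1 * v (l : ℝ) := by
      have h3 : |h * j| ≤ |(l : ℝ)| + 1 := by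
        rw [abs_le]
        constructor
        · have : -(|(l : ℝ)| + 1) ≤ (l : ℝ) := by
            have := neg_abs_le (l : ℝ); linarith
          linarith
        · have : (l : ℝ) ≤ |(l : ℝ)| := le_abs_self _
          linarith
      have h4 : v (h * j) ≤ v (|(l : ℝ)| + 1) := by
        apply hmono
        rw [abs_of_nonneg (by positivity : (0:ℝ) ≤ |(l : ℝ)| + 1)]
        exact h3
      have h5 : v (|(l : ℝ)| + 1) ≤ v 1 * v (l : ℝ) := by
        calc v (|(l : ℝ)| + 1) = v (1 + |(l : ℝ)|) := by ring_nf
          _ ≤ v 1 * v |(l : ℝ)| := hsub 1 _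
          _ = v 1 * v (l : ℝ) := by rw [hvl]
      exact h4.trans h5
    have hvpos1 : 0 ≤ v 1 := (hpos 1).le
    have hvposl : 0 ≤ v (l : ℝ) := (hpos _).le
    calc g j = ‖f (h * j)‖ ^ 2 * v (h * j) ^ 2 := rfl
      _ ≤ locSup f l ^ 2 * (v 1 * v (l : ℝ)) ^ 2 := by
          apply mul_le_mul
          · exact pow_le_pow_left₀ (norm_nonneg _) habs 2
          · exact pow_le_pow_left₀ (hpos _).le hvbound 2
          · exact sq_nonneg _
          · exact sq_nonneg _
      _ = v 1 ^ 2 * a l := by rw [hadef]; ring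
  -- counting : number of j in a fiber
  set N : ℕ := (⌈1/h⌉ : ℤ).toNat with hN
  have hNpos : (0:ℤ) < ⌈1/h⌉ := by
    have : (0:ℝ) < 1/h := by positivity
    exact Int.ceil_pos.mpr this
  have hNcast : ((⌈1/h⌉ : ℤ) : ℝ) = (N : ℝ) := by
    have := Int.toNat_of_nonneg hNpos.le
    rw [hN]; exact_mod_cast this.symm
  -- injection into ℤ × Fin N
  set m : ℤ → ℤ := fun l => ⌈(l : ℝ) / h⌉ with hm
  have hfiber : ∀ j : ℤ, m (φ j) ≤ j ∧ j < m (φ j) + N := by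
    intro j
    set l : ℤ := φ j with hl
    have h1 : (l : ℝ) ≤ h * j := Int.floor_le _
    have h2 : h * j < (l : ℝ) + 1 := Int.lt_floor_add_one _
    constructor
    · rw [hm]
      apply Int.ceil_le.mpr
      rw [div_le_iff₀ hh]
      push_cast; linarith [mul_comm h (j:ℝ)]
    · have hjlt : (j : ℝ) < (l : ℝ) / h + 1 / h := by
        rw [← add_div, lt_div_iff₀ hh]
        linarith [mul_comm (j:ℝ) h]
      have hcl : (l : ℝ) / h ≤ (m l : ℝ) := Int.le_ceil _
      have hch : 1 / h ≤ ((⌈1/h⌉ : ℤ) : ℝ) := Int.le_ceil _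
      have : (j : ℝ) < (m l : ℝ) + (N : ℝ) := by
        rw [← hNcast]; linarith
      exact_mod_cast this
  have hNpos' : 0 < N := by omega
  haveI : NeZero N := ⟨by omega⟩
  set ψ : ℤ → ℤ × Fin N := fun j =>
    (φ j, ⟨(j - m (φ j)).toNat, by
      have := hfiber j
      omega⟩) with hψ
  have hψinj : Function.Injective ψ := by
    intro j j' hjj
    have h1 : φ j = φ j' := congrArg Prod.fst hjj
    have h2 : (j - m (φ j)).toNat = (j' - m (φ j')).toNat := by
      have := congrArg Prod.snd hjj
      simpa [hψ] using congrArg Fin.val this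
    have h3 : m (φ j) = m (φ j') := by rw [h1]
    have hj := hfiber j
    have hj' := hfiber j'
    omega
  -- ENNReal computation
  set A : ℤ → ENNReal := fun l => ENNReal.ofReal (a l) with hA
  set G : ℤ → ENNReal := fun j => ENNReal.ofReal (g j) with hG
  have hsumA : ∑' l, A l = ENNReal.ofReal (∑' l, a l) :=
    (ENNReal.ofReal_tsum_of_nonneg haa hW).symm
  have hAtop : ∑' l, A l ≠ ⊤ := by rw [hsumA]; exact ENNReal.ofReal_ne_top
  have step1 : ∑' j, G j ≤ ENNReal.ofReal (v 1 ^ 2) * ∑' j, A (φ j) := by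
    rw [← ENNReal.tsum_mul_left]
    apply ENNReal.tsum_le_tsum
    intro j
    rw [hG, hA, ← ENNReal.ofReal_mul (sq_nonneg _)]
    exact ENNReal.ofReal_le_ofReal (key j)
  have step2 : ∑' j, A (φ j) ≤ (N : ENNReal) * ∑' l, A l := by
    have hcomp : ∀ j, A (φ j) = (fun p : ℤ × Fin N => A p.1) (ψ j) := fun j => rfl
    calc ∑' j, A (φ j) = ∑' j, (fun p : ℤ × Fin N => A p.1) (ψ j) := by
          exact tsum_congr hcomp
      _ ≤ ∑' p : ℤ × Fin N, A p.1 := ENNReal.tsum_comp_le_tsum_of_injective hψinj _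
      _ = ∑' l : ℤ, ∑' _ : Fin N, A l := ENNReal.tsum_prod (f := fun (l : ℤ) (_ : Fin N) => A l)
      _ = ∑' l : ℤ, (N : ENNReal) * A l := by
          apply tsum_congr; intro l
          rw [tsum_fintype, Finset.sum_const, Finset.card_univ, Fintype.card_fin, nsmul_eq_mul]
      _ = (N : ENNReal) * ∑' l, A l := ENNReal.tsum_mul_left
  have main : ∑' j, G j ≤ ENNReal.ofReal (v 1 ^ 2) * ((N : ENNReal) * ∑' l, A l) :=
    step1.trans (mul_le_mul_right step2 _)
  have hrhs_ne_top : ENNReal.ofReal (v 1 ^ 2) * ((N : ENNReal) * ∑' l, A l) ≠ ⊤ := by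
    apply ENNReal.mul_ne_top ENNReal.ofReal_ne_top
    exact ENNReal.mul_ne_top (ENNReal.natCast_ne_top N) hAtop
  have hGtop : ∑' j, G j ≠ ⊤ := ne_top_of_le_ne_top hrhs_ne_top main
  have hgsum : Summable g := by
    have := ENNReal.summable_toReal hGtop
    refine this.congr fun j => ?_
    rw [hG, ENNReal.toReal_ofReal (hga j)]
  have hsumG : ∑' j, G j = ENNReal.ofReal (∑' j, g j) :=
    (ENNReal.ofReal_tsum_of_nonneg hga hgsum).symm
  -- convert back to reals
  have hfinal : ∑' j, g j ≤ (N : ℝ) * v 1 ^ 2 * ∑' l, a l := by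
    have := main
    rw [hsumG, hsumA] at this
    have hrw : (N : ENNReal) * ENNReal.ofReal (∑' l, a l)
        = ENNReal.ofReal ((N : ℝ) * ∑' l, a l) := by
      rw [ENNReal.ofReal_mul (by positivity : (0:ℝ) ≤ (N:ℝ))]
      congr 1
      simp
    rw [hrw, ← ENNReal.ofReal_mul (sq_nonneg _)] at this
    have := (ENNReal.ofReal_le_ofReal_iff (by
      have hts : 0 ≤ ∑' l, a l := tsum_nonneg haa
      positivity)).mp this
    linarith
  rw [hNcast]
  linarith
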